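/- arXiv:2011.12332 — 2 statements merged into one kernel-verified Lean document; each statement's English description precedes it below -/
import Mathlib

section
/- Let m₀, …, m_k be positive integers with gcd(m_i, m_{i+1}) = d for every 0 ≤ i ≤ k−1, and suppose m_i divides m_{i−1} + m_{i+1} for 0 < i < k. Let e be a positive common multiple of m₀ and m_k. Then e·d·Σ_{i=0}^{k−1} 1/(m_i m_{i+1}) is a positive integer (the sum taken in ℚ). -/
/-- Integrality of the screw number: for a bamboo with positive multiplicities `m₀,…,m_k`,
`gcd(m_i, m_{i+1}) = d` and `m_i ∣ m_{i-1} + m_{i+1}`, and `e` a positive common multiple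
of `m₀` and `m_k`, the quantity `e·d·Σ 1/(m_i m_{i+1})` is a positive integer. -/
theorem stmt6 (k : ℕ) (hk : 1 ≤ k) (m : ℕ → ℕ) (d e : ℕ)
    (hpos : ∀ i ≤ k, 0 < m i)
    (hgcd : ∀ i < k, Nat.gcd (m i) (m (i+1)) = d)
    (hdvd : ∀ i, 0 < i → i < k → m i ∣ m (i-1) + m (i+1))
    (he : 0 < e) (he0 : m 0 ∣ e) (hek : m k ∣ e) :
    ∃ n : ℕ, 0 < n ∧
      (e : ℚ) * (d : ℚ) * ∑ i ∈ Finset.range k, 1 / ((m i : ℚ) * (m (i+1) : ℚ)) = n := by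
  have hd : 0 < d := by
    have h := hgcd 0 hk
    norm_num at h
    have h0 := hpos 0 (by omega)
    have := Nat.gcd_pos_of_pos_left (m 1) h0
    omega
  have hdm : ∀ i ≤ k, d ∣ m i := by
    intro i hi
    rcases Nat.lt_or_ge i k with h | h
    · exact (hgcd i h) ▸ Nat.gcd_dvd_left _ _
    · have hik : i = k := by omega
      rw [hik]
      have h1 := hgcd (k-1) (by omega)
      have hk1 : k - 1 + 1 = k := by omega
      rw [hk1] at h1
      exact h1 ▸ Nat.gcd_dvd_right _ _
  set n : ℕ → ℕ := fun i => m i / d with hn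
  have hmn : ∀ i ≤ k, m i = d * n i := fun i hi =>
    (Nat.mul_div_cancel' (hdm i hi)).symm
  have hnpos : ∀ i ≤ k, 0 < n i := by
    intro i hi
    have h1 := hpos i hi
    have h2 := hmn i hi
    rcases Nat.eq_zero_or_pos (n i) with h | h
    · rw [h, Nat.mul_zero] at h2; omega
    · exact h
  have hcop : ∀ i < k, Nat.Coprime (n i) (n (i+1)) := by
    intro i hi
    have h0 : 0 < Nat.gcd (m i) (m (i+1)) := by rw [hgcd i hi]; exact hd
    have := Nat.coprime_div_gcd_div_gcd h0
    rwa [hgcd i hi] at this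
  have hndvd : ∀ i, 0 < i → i < k → n i ∣ n (i-1) + n (i+1) := by
    intro i h0 h1
    have h2 := hdvd i h0 h1
    rw [hmn i (by omega), hmn (i-1) (by omega), hmn (i+1) (by omega),
      ← Nat.mul_add] at h2
    exact (Nat.mul_dvd_mul_iff_left hd).mp h2
  -- key induction
  have key : ∀ j, 1 ≤ j → j ≤ k → ∃ b b' : ℤ,
      (∑ i ∈ Finset.range j, 1 / ((m i : ℚ) * (m (i+1) : ℚ))) *
        ((d : ℚ)^2 * (n 0 : ℚ) * (n j : ℚ)) = (b : ℚ) ∧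
      b * (n (j-1) : ℤ) = b' * (n j : ℤ) + (n 0 : ℤ) := by
    intro j
    induction j with
    | zero => omega
    | succ j ih =>
      intro _ hjk
      rcases Nat.eq_zero_or_pos j with hj0 | hj1
      · subst hj0
        refine ⟨1, 0, ?_, by simp⟩
        have h0 : (m 0 : ℚ) = (d : ℚ) * (n 0 : ℚ) := by
          exact_mod_cast congrArg (Nat.cast (R := ℚ)) (hmn 0 (by omega))
        have h1 : (m 1 : ℚ) = (d : ℚ) * (n 1 : ℚ) := by
          exact_mod_cast congrArg (Nat.cast (R := ℚ)) (hmn 1 (by omega))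
        have hd0 : (d : ℚ) ≠ 0 := by positivity
        have hn0 : (n 0 : ℚ) ≠ 0 := by
          have := hnpos 0 (by omega); positivity
        have hn1 : (n 1 : ℚ) ≠ 0 := by
          have := hnpos 1 (by omega); positivity
        rw [Finset.sum_range_one, h0, h1]
        push_cast
        field_simp
      · obtain ⟨b, b', hS, hrec⟩ := ih hj1 (by omega)
        have hj1' : j - 1 + 1 = j := by omega
        have hdvdn := hndvd j hj1 (by omega)
        have hdvdZ : (n j : ℤ) ∣ (b * (n (j+1) : ℤ) + (n 0 : ℤ)) := by
          have h1 : (n j : ℤ) ∣ ((n (j-1) : ℤ) + (n (j+1) : ℤ)) := by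
            exact_mod_cast Int.natCast_dvd_natCast.mpr hdvdn
          have h2 : b * (n (j+1) : ℤ) + (n 0 : ℤ)
              = b * ((n (j-1) : ℤ) + (n (j+1) : ℤ)) - b' * (n j : ℤ) := by
            linarith [hrec]
          rw [h2]
          exact dvd_sub (Dvd.dvd.mul_left h1 b) (Dvd.dvd.mul_left dvd_rfl b')
        obtain ⟨c, hc⟩ := hdvdZ
        refine ⟨c, b, ?_, ?_⟩
        · rw [Finset.sum_range_succ]
          have hmj : (m j : ℚ) = (d : ℚ) * (n j : ℚ) := by
            exact_mod_cast congrArg (Nat.cast (R := ℚ)) (hmn j (by omega))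
          have hmj1 : (m (j+1) : ℚ) = (d : ℚ) * (n (j+1) : ℚ) := by
            exact_mod_cast congrArg (Nat.cast (R := ℚ)) (hmn (j+1) (by omega))
          have hd0 : (d : ℚ) ≠ 0 := by positivity
          have hn0 : (n 0 : ℚ) ≠ 0 := by
            have := hnpos 0 (by omega); positivity
          have hnj : (n j : ℚ) ≠ 0 := by
            have := hnpos j (by omega); positivity
          have hnj1 : (n (j+1) : ℚ) ≠ 0 := by
            have := hnpos (j+1) (by omega); positivity
          have hcQ : (b : ℚ) * (n (j+1) : ℚ) + (n 0 : ℚ) = (n j : ℚ) * (c : ℚ) := by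
            exact_mod_cast congrArg (Int.cast (R := ℚ)) hc
          rw [hmj, hmj1]
          apply mul_right_cancel₀ hnj
          have hinv : 1/(((d:ℚ)*(n j : ℚ))*((d:ℚ)*(n (j+1) : ℚ)))
              * ((d:ℚ)^2*(n 0 : ℚ)*(n (j+1) : ℚ)) * (n j : ℚ) = (n 0 : ℚ) := by
            field_simp
          linear_combination hS * (n (j+1) : ℚ) + hinv + hcQ
        · have hj' : j + 1 - 1 = j := by omega
          rw [hj']
          linarith [hc]
  obtain ⟨b, b', hS, hrec⟩ := key k hk le_rfl
  -- gcd (n 0) (n k) divides b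
  set g : ℕ := Nat.gcd (n 0) (n k) with hg
  have hgpos : 0 < g := Nat.gcd_pos_of_pos_left _ (hnpos 0 (by omega))
  have hgb : (g : ℤ) ∣ b := by
    have h1 : (g : ℤ) ∣ b * (n (k-1) : ℤ) := by
      rw [hrec]
      exact dvd_add (Dvd.dvd.mul_left (Int.natCast_dvd_natCast.mpr (Nat.gcd_dvd_right _ _)) b')
        (Int.natCast_dvd_natCast.mpr (Nat.gcd_dvd_left _ _))
    have hcopg : Nat.Coprime g (n (k-1)) := by
      have hck := hcop (k-1) (by omega)
      have hk1 : k - 1 + 1 = k := by omega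
      rw [hk1] at hck
      exact Nat.Coprime.coprime_dvd_left (Nat.gcd_dvd_right _ _) hck.symm
    have : IsCoprime (g : ℤ) ((n (k-1) : ℕ) : ℤ) := Int.isCoprime_iff_gcd_eq_one.mpr (by
      simpa [Int.gcd_natCast_natCast] using hcopg)
    exact this.dvd_of_dvd_mul_right h1
  obtain ⟨b2, hb2⟩ := hgb
  -- e / d is a common multiple of n 0 and n k
  obtain ⟨f, hf⟩ : d ∣ e := dvd_trans (hdm 0 (by omega)) he0
  have hn0f : n 0 ∣ f := by
    have : d * n 0 ∣ d * f := by rw [← hmn 0 (by omega), ← hf]; exact he0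
    exact (Nat.mul_dvd_mul_iff_left hd).mp this
  have hnkf : n k ∣ f := by
    have : d * n k ∣ d * f := by rw [← hmn k le_rfl, ← hf]; exact hek
    exact (Nat.mul_dvd_mul_iff_left hd).mp this
  obtain ⟨c, hcf⟩ : Nat.lcm (n 0) (n k) ∣ f := Nat.lcm_dvd hn0f hnkf
  have hgl : g * Nat.lcm (n 0) (n k) = n 0 * n k := Nat.gcd_mul_lcm _ _
  -- the sum is positive
  have hsum_pos : 0 < ∑ i ∈ Finset.range k, 1 / ((m i : ℚ) * (m (i+1) : ℚ)) := by
    apply Finset.sum_pos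
    · intro i hi
      have hik : i < k := Finset.mem_range.mp hi
      have h1 : (0:ℚ) < (m i : ℚ) := by exact_mod_cast hpos i (by omega)
      have h2 : (0:ℚ) < (m (i+1) : ℚ) := by exact_mod_cast hpos (i+1) (by omega)
      positivity
    · exact Finset.nonempty_range_iff.mpr (by omega)
  -- final value
  have hd0 : (d : ℚ) ≠ 0 := by positivity
  have hn0 : (n 0 : ℚ) ≠ 0 := by have := hnpos 0 (by omega); positivity
  have hnk : (n k : ℚ) ≠ 0 := by have := hnpos k le_rfl; positivity
  have hval : (e : ℚ) * (d : ℚ) * ∑ i ∈ Finset.range k, 1 / ((m i : ℚ) * (m (i+1) : ℚ))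
      = ((c : ℤ) * b2 : ℤ) := by
    have heQ : (e : ℚ) = (d : ℚ) * ((Nat.lcm (n 0) (n k) : ℚ) * (c : ℚ)) := by
      rw_mod_cast [hf, hcf]
    have hglQ : (g : ℚ) * (Nat.lcm (n 0) (n k) : ℚ) = (n 0 : ℚ) * (n k : ℚ) := by
      exact_mod_cast congrArg (Nat.cast (R := ℚ)) hgl
    have hb2Q : (b : ℚ) = (g : ℚ) * (b2 : ℚ) := by exact_mod_cast congrArg (Int.cast (R := ℚ)) hb2
    rw [heQ]
    push_cast
    have hS' := hS
    rw [hb2Q] at hS'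
    apply mul_right_cancel₀ (mul_ne_zero hn0 hnk)
    linear_combination hS' * ((Nat.lcm (n 0) (n k) : ℚ) * (c : ℚ)) + hglQ * ((c : ℚ) * (b2 : ℚ))
  have hz_pos : (0:ℤ) < c * b2 := by
    have : (0:ℚ) < ((c : ℤ) * b2 : ℤ) := by
      rw [← hval]
      have he' : (0:ℚ) < (e:ℚ) := by exact_mod_cast he
      have hd' : (0:ℚ) < (d:ℚ) := by exact_mod_cast hd
      positivity
    exact_mod_cast this
  refine ⟨(c * b2 : ℤ).toNat, by omega, ?_⟩
  rw [hval]
  exact_mod_cast (Int.toNat_of_nonneg (le_of_lt hz_pos)).symm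
end

section
/- The 6×6 symmetric integer matrix M = [[2,−1,0,0,0,1],[−1,2,−1,0,0,0],[0,−1,2,−1,0,0],[0,0,−1,2,−1,0],[0,0,0,−1,2,0],[1,0,0,0,0,3]] is positive definite, and its upper-left 5×5 block (the A₅ Cartan matrix) is an even form, i.e. all diagonal entries of the block and all values vᵀBv for v ∈ ℤ⁵ are even. -/
open Matrix

/-- The form `Q̃` of the A'Campo double `(7,6)`-cusp. -/
def M12 : Matrix (Fin 6) (Fin 6) ℤ :=
  !![2,-1,0,0,0,1; -1,2,-1,0,0,0; 0,-1,2,-1,0,0; 0,0,-1,2,-1,0; 0,0,0,-1,2,0; 1,0,0,0,0,3]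

/-- Its upper-left `5×5` block, the `A₅` Cartan matrix. -/
def B12 : Matrix (Fin 5) (Fin 5) ℤ := fun i j => M12 i.castSucc j.castSucc

lemma M12_sos (v : Fin 6 → ℤ) : v ⬝ᵥ M12.mulVec v =
    (v 0 + v 5)^2 + 2*(v 5)^2 + (v 0 - v 1)^2 + (v 1 - v 2)^2 +
    (v 2 - v 3)^2 + (v 3 - v 4)^2 + (v 4)^2 := by
  have h3 : (Fin.succ 2 : Fin 6) = 3 := rfl
  have h4 : ((Fin.succ 2).succ : Fin 6) = 4 := rfl
  have h5 : ((Fin.succ 2).succ.succ : Fin 6) = 5 := rfl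
  simp [M12, dotProduct, mulVec, Fin.sum_univ_succ, Matrix.cons_val_zero, Matrix.cons_val_succ,
    h3, h4, h5]
  ring

lemma B12_expand (v : Fin 5 → ℤ) : v ⬝ᵥ B12.mulVec v =
    2*((v 0)^2 + (v 1)^2 + (v 2)^2 + (v 3)^2 + (v 4)^2
      - v 0 * v 1 - v 1 * v 2 - v 2 * v 3 - v 3 * v 4) := by
  have h2 : (Fin.succ 1 : Fin 5) = 2 := rfl
  have h3 : ((Fin.succ 1).succ : Fin 5) = 3 := rfl
  have h4 : ((Fin.succ 1).succ.succ : Fin 5) = 4 := rfl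
  have h2' : (Fin.succ 2 : Fin 5) = 3 := rfl
  have h3' : ((Fin.succ 2).succ : Fin 5) = 4 := rfl
  have c0 : ∀ i : Fin 5, (i.castSucc : Fin 6) = ⟨i.1, by omega⟩ := fun i => rfl
  simp [B12, M12, dotProduct, mulVec, Fin.sum_univ_succ, Matrix.cons_val_zero,
    Matrix.cons_val_succ, h2, h3, h4, h2', h3', Fin.castSucc, Fin.castAdd, Fin.castLE]
  ring

/-- `M12` is positive definite and its upper-left `5×5` block is an even form. -/
theorem stmt12 :
    (∀ v : Fin 6 → ℤ, v ≠ 0 → 0 < v ⬝ᵥ M12.mulVec v) ∧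
    (∀ i, Even (B12 i i)) ∧
    (∀ v : Fin 5 → ℤ, Even (v ⬝ᵥ B12.mulVec v)) := by
  refine ⟨?_, ?_, ?_⟩
  · intro v hv
    rw [M12_sos]
    by_contra hle
    push_neg at hle
    have n1 := sq_nonneg (v 0 + v 5); have n2 := sq_nonneg (v 5)
    have n3 := sq_nonneg (v 0 - v 1); have n4 := sq_nonneg (v 1 - v 2)
    have n5 := sq_nonneg (v 2 - v 3); have n6 := sq_nonneg (v 3 - v 4)
    have n7 := sq_nonneg (v 4)
    have e2 : v 5 = 0 := by
      have : (v 5)^2 = 0 := le_antisymm (by linarith) n2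
      exact pow_eq_zero_iff (by norm_num) |>.mp this
    have e1 : v 0 = 0 := by
      have : (v 0 + v 5)^2 = 0 := le_antisymm (by linarith) n1
      have := pow_eq_zero_iff (n := 2) (by norm_num) |>.mp this
      omega
    have e3 : v 1 = 0 := by
      have : (v 0 - v 1)^2 = 0 := le_antisymm (by linarith) n3
      have := pow_eq_zero_iff (n := 2) (by norm_num) |>.mp this
      omega
    have e4 : v 2 = 0 := by
      have : (v 1 - v 2)^2 = 0 := le_antisymm (by linarith) n4
      have := pow_eq_zero_iff (n := 2) (by norm_num) |>.mp this
      omega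
    have e5 : v 3 = 0 := by
      have : (v 2 - v 3)^2 = 0 := le_antisymm (by linarith) n5
      have := pow_eq_zero_iff (n := 2) (by norm_num) |>.mp this
      omega
    have e6 : v 4 = 0 := by
      have : (v 3 - v 4)^2 = 0 := le_antisymm (by linarith) n6
      have := pow_eq_zero_iff (n := 2) (by norm_num) |>.mp this
      omega
    exact hv (funext fun i => by fin_cases i <;> assumption)
  · intro i
    fin_cases i <;> exact ⟨1, by norm_num [B12, M12, Fin.castSucc, Fin.castAdd, Fin.castLE]⟩
  · intro v
    rw [B12_expand]
    exact ⟨_, two_mul _⟩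
end
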